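/- For all integers n ≥ r ≥ s ≥ 0, the inclusion matrix M_s^r(K_n^r) of the complete r-uniform hypergraph on n vertices (rows indexed by r-subsets of [n], columns by s-subsets, with entry 1 iff the s-set is contained in the r-set) has rank over ℚ equal to min(C(n,r), C(n,s)). -/
import Mathlib


/-- The higher inclusion matrix `M_s^r(G)` of the hypergraph on `Fin n` with edge set `E`:
rows indexed by edges, columns by `s`-subsets of `Fin n`, entry `1` iff containment. -/
def inclusionMatrix (n s : ℕ) (E : Finset (Finset (Fin n))) :
    Matrix {e : Finset (Fin n) // e ∈ E} {S : Finset (Fin n) // S.card = s} ℚ :=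
  fun e S => if (S : Finset (Fin n)) ⊆ (e : Finset (Fin n)) then 1 else 0

open Finset

section Aux

variable {n : ℕ}

private lemma expand_sq {α β : Type*} [DecidableEq α] [DecidableEq β]
    (U : Finset α) (V : Finset β) (P : α → β → Prop) [∀ a b, Decidable (P a b)] (x : β → ℚ) :
    ∑ e ∈ U, (∑ S ∈ V, if P e S then x S else 0) ^ 2
      = ∑ S ∈ V, ∑ T ∈ V, x S * x T * ((U.filter fun e => P e S ∧ P e T).card : ℚ) := by
  have h1 : ∀ e, (∑ S ∈ V, if P e S then x S else 0) ^ 2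
      = ∑ S ∈ V, ∑ T ∈ V, (if P e S ∧ P e T then x S * x T else 0) := by
    intro e
    rw [sq, Finset.sum_mul_sum]
    refine Finset.sum_congr rfl fun S _ => Finset.sum_congr rfl fun T _ => ?_
    by_cases h : P e S <;> by_cases h' : P e T <;> simp [h, h']
  calc ∑ e ∈ U, (∑ S ∈ V, if P e S then x S else 0) ^ 2
      = ∑ e ∈ U, ∑ S ∈ V, ∑ T ∈ V, (if P e S ∧ P e T then x S * x T else 0) :=
        Finset.sum_congr rfl fun e _ => h1 e
    _ = ∑ S ∈ V, ∑ e ∈ U, ∑ T ∈ V, (if P e S ∧ P e T then x S * x T else 0) :=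
        Finset.sum_comm
    _ = ∑ S ∈ V, ∑ T ∈ V, ∑ e ∈ U, (if P e S ∧ P e T then x S * x T else 0) :=
        Finset.sum_congr rfl fun S _ => Finset.sum_comm
    _ = ∑ S ∈ V, ∑ T ∈ V, x S * x T * ((U.filter fun e => P e S ∧ P e T).card : ℚ) := by
        refine Finset.sum_congr rfl fun S _ => Finset.sum_congr rfl fun T _ => ?_
        rw [← Finset.sum_filter, Finset.sum_const, nsmul_eq_mul, mul_comm]

private lemma card_filter_superset (r : ℕ) (A : Finset (Fin n)) (hA : A.card ≤ r) :
    (((univ : Finset (Fin n)).powersetCard r).filter fun e => A ⊆ e).card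
      = (n - A.card).choose (r - A.card) := by
  have h1 : ((univ \ A).powersetCard (r - A.card)).card = (n - A.card).choose (r - A.card) := by
    rw [Finset.card_powersetCard, Finset.card_sdiff_of_subset (Finset.subset_univ A), Finset.card_univ,
      Fintype.card_fin]
  rw [← h1]
  refine Finset.card_bij' (fun e _ => e \ A) (fun B _ => B ∪ A) ?_ ?_ ?_ ?_
  · intro e he
    rw [Finset.mem_filter, Finset.mem_powersetCard] at he
    obtain ⟨⟨-, hcard⟩, hAe⟩ := he
    rw [Finset.mem_powersetCard]
    exact ⟨Finset.sdiff_subset_sdiff (Finset.subset_univ e) le_rfl,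
      by rw [Finset.card_sdiff_of_subset hAe, hcard]⟩
  · intro B hB
    rw [Finset.mem_powersetCard] at hB
    obtain ⟨hBsub, hBcard⟩ := hB
    have hdisj : Disjoint B A := (Finset.subset_sdiff.mp hBsub).2
    rw [Finset.mem_filter, Finset.mem_powersetCard]
    refine ⟨⟨Finset.subset_univ _, ?_⟩, Finset.subset_union_right⟩
    rw [Finset.card_union_of_disjoint hdisj, hBcard]
    omega
  · intro e he
    rw [Finset.mem_filter] at he
    exact Finset.sdiff_union_of_subset he.2
  · intro B hB
    rw [Finset.mem_powersetCard] at hB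
    have hdisj : Disjoint B A := (Finset.subset_sdiff.mp hB.1).2
    show (B ∪ A) \ A = B
    rw [Finset.union_sdiff_right, Finset.sdiff_eq_self_iff_disjoint.mpr hdisj]

private lemma filter_superset_empty (r : ℕ) (A : Finset (Fin n)) (hA : r < A.card) :
    (((univ : Finset (Fin n)).powersetCard r).filter fun e => A ⊆ e) = ∅ := by
  rw [Finset.filter_eq_empty_iff]
  intro e he hAe
  rw [Finset.mem_powersetCard] at he
  have := Finset.card_le_card hAe
  omega

private lemma entry1 {r s : ℕ} (hsr : s ≤ r) (hrn : r ≤ n) (hrs : r + s ≤ n)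
    {S T : Finset (Fin n)} (hS : S.card = s) (hT : T.card = s) :
    ((((univ : Finset (Fin n)).powersetCard r).filter fun e => S ⊆ e ∧ T ⊆ e).card
      = ∑ j ∈ range (s + 1), (n - 2 * s).choose (n - r - j) * (S ∩ T).card.choose j) := by
  have hui : (S ∪ T).card + (S ∩ T).card = 2 * s := by
    rw [Finset.card_union_add_card_inter, hS, hT]; ring
  have hile : (S ∩ T).card ≤ s := hS ▸ Finset.card_le_card Finset.inter_subset_left
  have hfe : (((univ : Finset (Fin n)).powersetCard r).filter fun e => S ⊆ e ∧ T ⊆ e)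
      = (((univ : Finset (Fin n)).powersetCard r).filter fun e => S ∪ T ⊆ e) :=
    Finset.filter_congr fun e _ => by rw [Finset.union_subset_iff]
  rw [hfe]
  by_cases hur : (S ∪ T).card ≤ r
  · rw [card_filter_superset r (S ∪ T) hur]
    have hsymm : (n - (S ∪ T).card).choose (r - (S ∪ T).card)
        = (n - (S ∪ T).card).choose (n - r) := by
      rw [← Nat.choose_symm (show r - (S ∪ T).card ≤ n - (S ∪ T).card by omega)]
      congr 1
      omega
    have hnu : n - (S ∪ T).card = (n - 2 * s) + (S ∩ T).card := by omega
    rw [hsymm, hnu, Nat.add_choose_eq,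
      Finset.Nat.sum_antidiagonal_eq_sum_range_succ
        (fun a b => (n - 2 * s).choose a * (S ∩ T).card.choose b) (n - r),
      ← Finset.sum_range_reflect]
    rw [← Finset.sum_subset (Finset.range_subset_range.mpr (show s + 1 ≤ n - r + 1 by omega))
      (fun j hj hj' => ?_)]
    · refine Finset.sum_congr rfl fun j hj => ?_
      rw [Finset.mem_range] at hj
      have e1 : n - r + 1 - 1 - j = n - r - j := by omega
      have e2 : n - r - (n - r - j) = j := by omega
      rw [e1, e2]
    · rw [Finset.mem_range] at hj
      rw [Finset.mem_range] at hj'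
      have e1 : n - r + 1 - 1 - j = n - r - j := by omega
      have e2 : n - r - (n - r - j) = j := by omega
      rw [e1, e2, Nat.choose_eq_zero_of_lt (show (S ∩ T).card < j by omega), mul_zero]
  · rw [filter_superset_empty r (S ∪ T) (by omega), Finset.card_empty]
    symm
    refine Finset.sum_eq_zero fun j hj => ?_
    rw [Finset.mem_range] at hj
    rcases le_or_gt j (S ∩ T).card with h | h
    · rw [Nat.choose_eq_zero_of_lt (show n - 2 * s < n - r - j by omega), Nat.zero_mul]
    · rw [Nat.choose_eq_zero_of_lt h, Nat.mul_zero]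

private lemma entry2 {r s : ℕ} (hsr : s ≤ r) (hrn : r ≤ n) (hn : n ≤ r + s)
    {e f : Finset (Fin n)} (he : e.card = r) (hf : f.card = r) :
    (e ∩ f).card.choose s
      = ∑ j ∈ range (n - r + 1), (2 * r - n).choose (s - j) * (n - (e ∪ f).card).choose j := by
  have hui : (e ∪ f).card + (e ∩ f).card = 2 * r := by
    rw [Finset.card_union_add_card_inter, he, hf]; ring
  have hun : (e ∪ f).card ≤ n := by
    have := Finset.card_le_card (Finset.subset_univ (e ∪ f))
    rwa [Finset.card_univ, Fintype.card_fin] at this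
  have hru : r ≤ (e ∪ f).card := he ▸ Finset.card_le_card Finset.subset_union_left
  have hieq : (e ∩ f).card = (2 * r - n) + (n - (e ∪ f).card) := by omega
  rw [hieq, Nat.add_choose_eq,
    Finset.Nat.sum_antidiagonal_eq_sum_range_succ
      (fun a b => (2 * r - n).choose a * (n - (e ∪ f).card).choose b) s,
    ← Finset.sum_range_reflect]
  rw [← Finset.sum_subset (Finset.range_subset_range.mpr (show n - r + 1 ≤ s + 1 by omega))
    (fun j hj hj' => ?_)]
  · refine Finset.sum_congr rfl fun j hj => ?_
    rw [Finset.mem_range] at hj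
    have e1 : s + 1 - 1 - j = s - j := by omega
    have e2 : s - (s - j) = j := by omega
    rw [e1, e2]
  · rw [Finset.mem_range] at hj
    rw [Finset.mem_range] at hj'
    have e1 : s + 1 - 1 - j = s - j := by omega
    have e2 : s - (s - j) = j := by omega
    rw [e1, e2, Nat.choose_eq_zero_of_lt (show n - (e ∪ f).card < j by omega), mul_zero]

private lemma key1 {r s : ℕ} (hsr : s ≤ r) (hrn : r ≤ n) (hrs : r + s ≤ n)
    (x : Finset (Fin n) → ℚ)
    (hx : ∀ e ∈ (univ : Finset (Fin n)).powersetCard r,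
      ∑ S ∈ (univ : Finset (Fin n)).powersetCard s, (if S ⊆ e then x S else 0) = 0) :
    ∀ S ∈ (univ : Finset (Fin n)).powersetCard s, x S = 0 := by
  classical
  have hcards : ∀ S ∈ (univ : Finset (Fin n)).powersetCard s, S.card = s :=
    fun S hS => (Finset.mem_powersetCard.mp hS).2
  have hident : ∑ j ∈ range (s + 1), ((n - 2 * s).choose (n - r - j) : ℚ) *
        ∑ J ∈ (univ : Finset (Fin n)).powersetCard j,
          (∑ S ∈ (univ : Finset (Fin n)).powersetCard s, if J ⊆ S then x S else 0) ^ 2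
      = ∑ e ∈ (univ : Finset (Fin n)).powersetCard r,
          (∑ S ∈ (univ : Finset (Fin n)).powersetCard s, if S ⊆ e then x S else 0) ^ 2 := by
    rw [expand_sq ((univ : Finset (Fin n)).powersetCard r)
      ((univ : Finset (Fin n)).powersetCard s) (fun e S => S ⊆ e) x]
    have hj : ∀ j, ∑ J ∈ (univ : Finset (Fin n)).powersetCard j,
          (∑ S ∈ (univ : Finset (Fin n)).powersetCard s, if J ⊆ S then x S else 0) ^ 2
        = ∑ S ∈ (univ : Finset (Fin n)).powersetCard s,
            ∑ T ∈ (univ : Finset (Fin n)).powersetCard s,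
              x S * x T * ((S ∩ T).card.choose j : ℚ) := by
      intro j
      rw [expand_sq ((univ : Finset (Fin n)).powersetCard j)
        ((univ : Finset (Fin n)).powersetCard s) (fun J S => J ⊆ S) x]
      refine Finset.sum_congr rfl fun S _ => Finset.sum_congr rfl fun T _ => ?_
      congr 2
      rw [show (((univ : Finset (Fin n)).powersetCard j).filter fun J => J ⊆ S ∧ J ⊆ T)
            = (S ∩ T).powersetCard j by
          ext J
          simp only [Finset.mem_filter, Finset.mem_powersetCard, Finset.subset_inter_iff,
            Finset.subset_univ, true_and]
          tauto]
      rw [Finset.card_powersetCard]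
    simp_rw [hj]
    calc ∑ j ∈ range (s + 1), ((n - 2 * s).choose (n - r - j) : ℚ) *
            ∑ S ∈ (univ : Finset (Fin n)).powersetCard s,
              ∑ T ∈ (univ : Finset (Fin n)).powersetCard s,
                x S * x T * ((S ∩ T).card.choose j : ℚ)
        = ∑ S ∈ (univ : Finset (Fin n)).powersetCard s,
            ∑ T ∈ (univ : Finset (Fin n)).powersetCard s,
              ∑ j ∈ range (s + 1), ((n - 2 * s).choose (n - r - j) : ℚ) *
                (x S * x T * ((S ∩ T).card.choose j : ℚ)) := by
          simp_rw [Finset.mul_sum]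
          rw [Finset.sum_comm]
          exact Finset.sum_congr rfl fun S _ => Finset.sum_comm
      _ = ∑ S ∈ (univ : Finset (Fin n)).powersetCard s,
            ∑ T ∈ (univ : Finset (Fin n)).powersetCard s, x S * x T *
              (((((univ : Finset (Fin n)).powersetCard r).filter
                  fun e => S ⊆ e ∧ T ⊆ e).card : ℚ)) := by
          refine Finset.sum_congr rfl fun S hS => Finset.sum_congr rfl fun T hT => ?_
          rw [entry1 hsr hrn hrs (hcards S hS) (hcards T hT), Nat.cast_sum, Finset.mul_sum]
          refine Finset.sum_congr rfl fun j hj => ?_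
          push_cast
          ring
  have hQ0 : ∑ e ∈ (univ : Finset (Fin n)).powersetCard r,
      (∑ S ∈ (univ : Finset (Fin n)).powersetCard s, if S ⊆ e then x S else 0) ^ 2 = 0 :=
    Finset.sum_eq_zero fun e he => by rw [hx e he]; norm_num
  rw [hQ0] at hident
  have hterm := (Finset.sum_eq_zero_iff_of_nonneg (fun j _ =>
    mul_nonneg (Nat.cast_nonneg _) (Finset.sum_nonneg fun J _ => sq_nonneg _))).mp hident s
    (Finset.self_mem_range_succ s)
  have hcpos : (0 : ℚ) < ((n - 2 * s).choose (n - r - s) : ℚ) := by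
    exact_mod_cast Nat.choose_pos (show n - r - s ≤ n - 2 * s by omega)
  have hPs : ∑ J ∈ (univ : Finset (Fin n)).powersetCard s,
      (∑ S ∈ (univ : Finset (Fin n)).powersetCard s, if J ⊆ S then x S else 0) ^ 2 = 0 := by
    rcases mul_eq_zero.mp hterm with h | h
    · exact absurd h (ne_of_gt hcpos)
    · exact h
  intro S hS
  have hzero := (Finset.sum_eq_zero_iff_of_nonneg (fun J _ => sq_nonneg _)).mp hPs S hS
  have hsum : (∑ T ∈ (univ : Finset (Fin n)).powersetCard s, if S ⊆ T then x T else 0) = 0 :=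
    pow_eq_zero_iff (two_ne_zero) |>.mp hzero
  rw [Finset.sum_eq_single_of_mem S hS (fun T hT hne => ?_)] at hsum
  · rwa [if_pos (Finset.Subset.refl S)] at hsum
  · rw [if_neg]
    intro hsub
    exact hne (Finset.eq_of_subset_of_card_le hsub
      (by rw [hcards S hS, hcards T hT])).symm

private lemma key2 {r s : ℕ} (hsr : s ≤ r) (hrn : r ≤ n) (hn : n ≤ r + s)
    (y : Finset (Fin n) → ℚ)
    (hy : ∀ S ∈ (univ : Finset (Fin n)).powersetCard s,
      ∑ e ∈ (univ : Finset (Fin n)).powersetCard r, (if S ⊆ e then y e else 0) = 0) :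
    ∀ e ∈ (univ : Finset (Fin n)).powersetCard r, y e = 0 := by
  classical
  have hcards : ∀ e ∈ (univ : Finset (Fin n)).powersetCard r, e.card = r :=
    fun e he => (Finset.mem_powersetCard.mp he).2
  have hident : ∑ j ∈ range (n - r + 1), ((2 * r - n).choose (s - j) : ℚ) *
        ∑ J ∈ (univ : Finset (Fin n)).powersetCard j,
          (∑ e ∈ (univ : Finset (Fin n)).powersetCard r, if Disjoint J e then y e else 0) ^ 2
      = ∑ S ∈ (univ : Finset (Fin n)).powersetCard s,
          (∑ e ∈ (univ : Finset (Fin n)).powersetCard r, if S ⊆ e then y e else 0) ^ 2 := by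
    rw [expand_sq ((univ : Finset (Fin n)).powersetCard s)
      ((univ : Finset (Fin n)).powersetCard r) (fun S e => S ⊆ e) y]
    have hj : ∀ j, ∑ J ∈ (univ : Finset (Fin n)).powersetCard j,
          (∑ e ∈ (univ : Finset (Fin n)).powersetCard r, if Disjoint J e then y e else 0) ^ 2
        = ∑ e ∈ (univ : Finset (Fin n)).powersetCard r,
            ∑ f ∈ (univ : Finset (Fin n)).powersetCard r,
              y e * y f * ((n - (e ∪ f).card).choose j : ℚ) := by
      intro j
      rw [expand_sq ((univ : Finset (Fin n)).powersetCard j)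
        ((univ : Finset (Fin n)).powersetCard r) (fun J e => Disjoint J e) y]
      refine Finset.sum_congr rfl fun e he => Finset.sum_congr rfl fun f hf => ?_
      congr 2
      rw [show (((univ : Finset (Fin n)).powersetCard j).filter
            fun J => Disjoint J e ∧ Disjoint J f)
          = ((univ : Finset (Fin n)) \ (e ∪ f)).powersetCard j by
        ext J
        simp only [Finset.mem_filter, Finset.mem_powersetCard, Finset.subset_sdiff,
          Finset.subset_univ, true_and, Finset.disjoint_union_right]
        tauto]
      rw [Finset.card_powersetCard, Finset.card_sdiff_of_subset (Finset.subset_univ _),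
        Finset.card_univ, Fintype.card_fin]
    simp_rw [hj]
    calc ∑ j ∈ range (n - r + 1), ((2 * r - n).choose (s - j) : ℚ) *
            ∑ e ∈ (univ : Finset (Fin n)).powersetCard r,
              ∑ f ∈ (univ : Finset (Fin n)).powersetCard r,
                y e * y f * ((n - (e ∪ f).card).choose j : ℚ)
        = ∑ e ∈ (univ : Finset (Fin n)).powersetCard r,
            ∑ f ∈ (univ : Finset (Fin n)).powersetCard r,
              ∑ j ∈ range (n - r + 1), ((2 * r - n).choose (s - j) : ℚ) *
                (y e * y f * ((n - (e ∪ f).card).choose j : ℚ)) := by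
          simp_rw [Finset.mul_sum]
          rw [Finset.sum_comm]
          exact Finset.sum_congr rfl fun e _ => Finset.sum_comm
      _ = ∑ e ∈ (univ : Finset (Fin n)).powersetCard r,
            ∑ f ∈ (univ : Finset (Fin n)).powersetCard r, y e * y f *
              (((((univ : Finset (Fin n)).powersetCard s).filter
                  fun S => S ⊆ e ∧ S ⊆ f).card : ℚ)) := by
          refine Finset.sum_congr rfl fun e he => Finset.sum_congr rfl fun f hf => ?_
          rw [show (((univ : Finset (Fin n)).powersetCard s).filter fun S => S ⊆ e ∧ S ⊆ f)
                = (e ∩ f).powersetCard s by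
            ext S
            simp only [Finset.mem_filter, Finset.mem_powersetCard, Finset.subset_inter_iff,
              Finset.subset_univ, true_and]
            tauto]
          rw [Finset.card_powersetCard,
            entry2 hsr hrn hn (hcards e he) (hcards f hf), Nat.cast_sum, Finset.mul_sum]
          refine Finset.sum_congr rfl fun j hj => ?_
          push_cast
          ring
  have hQ0 : ∑ S ∈ (univ : Finset (Fin n)).powersetCard s,
      (∑ e ∈ (univ : Finset (Fin n)).powersetCard r, if S ⊆ e then y e else 0) ^ 2 = 0 :=
    Finset.sum_eq_zero fun S hS => by rw [hy S hS]; norm_num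
  rw [hQ0] at hident
  have hterm := (Finset.sum_eq_zero_iff_of_nonneg (fun j _ =>
    mul_nonneg (Nat.cast_nonneg _) (Finset.sum_nonneg fun J _ => sq_nonneg _))).mp hident
    (n - r) (Finset.self_mem_range_succ (n - r))
  have hcpos : (0 : ℚ) < ((2 * r - n).choose (s - (n - r)) : ℚ) := by
    exact_mod_cast Nat.choose_pos (show s - (n - r) ≤ 2 * r - n by omega)
  have hPs : ∑ J ∈ (univ : Finset (Fin n)).powersetCard (n - r),
      (∑ e ∈ (univ : Finset (Fin n)).powersetCard r, if Disjoint J e then y e else 0) ^ 2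
        = 0 := by
    rcases mul_eq_zero.mp hterm with h | h
    · exact absurd h (ne_of_gt hcpos)
    · exact h
  intro e he
  have hJmem : (univ : Finset (Fin n)) \ e ∈ (univ : Finset (Fin n)).powersetCard (n - r) := by
    rw [Finset.mem_powersetCard]
    refine ⟨Finset.sdiff_subset, ?_⟩
    rw [Finset.card_sdiff_of_subset (Finset.subset_univ e), Finset.card_univ, Fintype.card_fin,
      hcards e he]
  have hzero := (Finset.sum_eq_zero_iff_of_nonneg (fun J _ => sq_nonneg _)).mp hPs _ hJmem
  have hsum : (∑ f ∈ (univ : Finset (Fin n)).powersetCard r,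
      if Disjoint ((univ : Finset (Fin n)) \ e) f then y f else 0) = 0 :=
    pow_eq_zero_iff (two_ne_zero) |>.mp hzero
  rw [Finset.sum_eq_single_of_mem e he (fun f hf hne => ?_)] at hsum
  · rwa [if_pos (Finset.sdiff_disjoint)] at hsum
  · rw [if_neg]
    intro hd
    have hsub : f ⊆ e := by
      intro a ha
      by_contra hae
      exact (Finset.disjoint_left.mp hd)
        (Finset.mem_sdiff.mpr ⟨Finset.mem_univ a, hae⟩) ha
    exact hne (Finset.eq_of_subset_of_card_le hsub
      (by rw [hcards e he, hcards f hf]))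

private lemma inj1 {r s : ℕ} (hsr : s ≤ r) (hrn : r ≤ n) (hrs : r + s ≤ n) :
    Function.Injective
      (inclusionMatrix n s ((univ : Finset (Fin n)).powersetCard r)).mulVecLin := by
  rw [← LinearMap.ker_eq_bot, LinearMap.ker_eq_bot']
  intro x hx
  classical
  set x' : Finset (Fin n) → ℚ := fun A => if h : A.card = s then x ⟨A, h⟩ else 0 with hx'def
  have hx'S : ∀ S : {S : Finset (Fin n) // S.card = s}, x' ↑S = x S := by
    intro S
    simp only [hx'def, dif_pos S.2]
  have h0 : ∀ e ∈ (univ : Finset (Fin n)).powersetCard r,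
      ∑ S ∈ (univ : Finset (Fin n)).powersetCard s, (if S ⊆ e then x' S else 0) = 0 := by
    intro e he
    have hme := congrFun hx ⟨e, he⟩
    simp only [Matrix.mulVecLin_apply, Matrix.mulVec, dotProduct, inclusionMatrix,
      ite_mul, one_mul, zero_mul, Pi.zero_apply] at hme
    have hconv : ∑ S : {S : Finset (Fin n) // S.card = s},
        (if (S : Finset (Fin n)) ⊆ e then x' ↑S else 0) = 0 :=
      Eq.trans (Finset.sum_congr rfl fun S _ => by rw [hx'S S]) hme
    rw [Finset.sum_subtype ((univ : Finset (Fin n)).powersetCard s)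
      (fun A => Finset.mem_powersetCard_univ) (fun S => if S ⊆ e then x' S else 0)]
    exact hconv
  have hall := key1 hsr hrn hrs x' h0
  funext S
  have hmem : (S : Finset (Fin n)) ∈ (univ : Finset (Fin n)).powersetCard s :=
    Finset.mem_powersetCard_univ.mpr S.2
  have := hall _ hmem
  rw [hx'S S] at this
  simpa using this

private lemma inj2 {r s : ℕ} (hsr : s ≤ r) (hrn : r ≤ n) (hn : n ≤ r + s) :
    Function.Injective
      (Matrix.transpose (inclusionMatrix n s ((univ : Finset (Fin n)).powersetCard r))).mulVecLin := by
  rw [← LinearMap.ker_eq_bot, LinearMap.ker_eq_bot']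
  intro y hy
  classical
  set y' : Finset (Fin n) → ℚ :=
    fun A => if h : A ∈ (univ : Finset (Fin n)).powersetCard r then y ⟨A, h⟩ else 0 with hy'def
  have hy'e : ∀ e : {e : Finset (Fin n) // e ∈ (univ : Finset (Fin n)).powersetCard r},
      y' ↑e = y e := by
    intro e
    simp only [hy'def, dif_pos e.2]
  have h0 : ∀ S ∈ (univ : Finset (Fin n)).powersetCard s,
      ∑ e ∈ (univ : Finset (Fin n)).powersetCard r, (if S ⊆ e then y' e else 0) = 0 := by
    intro S hS
    have hScard : S.card = s := (Finset.mem_powersetCard.mp hS).2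
    have hme := congrFun hy ⟨S, hScard⟩
    simp only [Matrix.mulVecLin_apply, Matrix.mulVec, dotProduct, Matrix.transpose_apply,
      inclusionMatrix, ite_mul, one_mul, zero_mul, Pi.zero_apply] at hme
    have hconv : ∑ e : {e : Finset (Fin n) // e ∈ (univ : Finset (Fin n)).powersetCard r},
        (if S ⊆ (e : Finset (Fin n)) then y' ↑e else 0) = 0 :=
      Eq.trans (Finset.sum_congr rfl fun e _ => by rw [hy'e e]) hme
    rw [Finset.sum_subtype ((univ : Finset (Fin n)).powersetCard r)
      (fun A => Iff.rfl) (fun e => if S ⊆ e then y' e else 0)]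
    exact hconv
  have hall := key2 hsr hrn hn y' h0
  funext e
  have := hall _ e.2
  rw [hy'e e] at this
  simpa using this

end Aux

theorem stmt0 (n r s : ℕ) (hs : s ≤ r) (hr : r ≤ n) :
    (inclusionMatrix n s ((Finset.univ : Finset (Fin n)).powersetCard r)).rank
      = min (n.choose r) (n.choose s) := by
  classical
  have hcardE : Fintype.card
      {e : Finset (Fin n) // e ∈ (univ : Finset (Fin n)).powersetCard r} = n.choose r := by
    rw [Fintype.card_coe, Finset.card_powersetCard, Finset.card_univ, Fintype.card_fin]
  have hcardS : Fintype.card {S : Finset (Fin n) // S.card = s} = n.choose s := by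
    rw [Fintype.card_finset_len, Fintype.card_fin]
  by_cases hcase : r + s ≤ n
  · have hinj := inj1 (n := n) hs hr hcase
    have hrank : (inclusionMatrix n s ((univ : Finset (Fin n)).powersetCard r)).rank
        = n.choose s := by
      rw [Matrix.rank, LinearMap.finrank_range_of_inj hinj, Module.finrank_pi, hcardS]
    have hle : n.choose s ≤ n.choose r := by
      have := LinearMap.finrank_le_finrank_of_injective hinj
      rwa [Module.finrank_pi, Module.finrank_pi, hcardS, hcardE] at this
    rw [hrank, min_eq_right hle]
  · have hn : n ≤ r + s := by omega
    have hinj := inj2 (n := n) hs hr hn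
    have hrank : (inclusionMatrix n s ((univ : Finset (Fin n)).powersetCard r)).rank
        = n.choose r := by
      rw [← Matrix.rank_transpose, Matrix.rank, LinearMap.finrank_range_of_inj hinj,
        Module.finrank_pi, hcardE]
    have hle : n.choose r ≤ n.choose s := by
      have := LinearMap.finrank_le_finrank_of_injective hinj
      rwa [Module.finrank_pi, Module.finrank_pi, hcardS, hcardE] at this
    rw [hrank, min_eq_left hle]
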